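/- The polynomial f = xy³ + x³ ∈ F₂[x,y] has level 4. In particular, its level is strictly greater than ⌈log₂(‖f‖)⌉ + 1 = 3, where ‖f‖ = 3 is the maximum exponent of a variable occurring in a monomial of the support of f, and also strictly greater than ⌈log₂(deg f)⌉ + 1 = 3. -/

import Mathlib

open MvPolynomial

/-- `J^[q]`: the ideal generated by the `q`-th powers of the elements of `J`. -/
def bracketPow {R : Type*} [CommRing R] (q : ℕ) (J : Ideal R) : Ideal R :=
  Ideal.span ((fun a => a ^ q) '' (J : Set R))

/-- `I_e(g)` (for the prime `p`): the smallest ideal `J` with `g ∈ J^[p^e]`. -/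
def rootIdeal {R : Type*} [CommRing R] (p e : ℕ) (g : R) : Ideal R :=
  sInf {J : Ideal R | g ∈ bracketPow (p ^ e) J}

/-- `f` has level `e`: `e` is the least integer `≥ 1` such that
`f^(p^e - p) ∈ (I_e(f^(p^e - 1)))^[p^e]`. -/
def HasLevel {R : Type*} [CommRing R] (p : ℕ) (f : R) (e : ℕ) : Prop :=
  IsLeast {e' : ℕ | 1 ≤ e' ∧
    f ^ (p ^ e' - p) ∈ bracketPow (p ^ e') (rootIdeal p e' (f ^ (p ^ e' - 1)))} e

noncomputable section

abbrev R2 : Type := MvPolynomial (Fin 2) (ZMod 2)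


lemma two_smul_add_inj (ν : Fin 2 →₀ ℕ) : Function.Injective (fun n : Fin 2 →₀ ℕ => 2 • n + ν) := by
  intro a b h
  ext i
  have := DFunLike.congr_fun h i
  simp [Finsupp.add_apply, Finsupp.smul_apply] at this
  omega

def T (ν : Fin 2 →₀ ℕ) (g : R2) : R2 :=
  AddMonoidAlgebra.ofCoeff
    (Finsupp.comapDomain (fun n => 2 • n + ν) (AddMonoidAlgebra.coeff g) ((two_smul_add_inj ν).injOn))

lemma coeff_T (ν : Fin 2 →₀ ℕ) (g : R2) (n : Fin 2 →₀ ℕ) :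
    coeff n (T ν g) = coeff (2 • n + ν) g := rfl

lemma T_add (ν : Fin 2 →₀ ℕ) (g h : R2) : T ν (g + h) = T ν g + T ν h := by
  ext n; simp [coeff_T, coeff_add]

lemma T_zero (ν : Fin 2 →₀ ℕ) : T ν 0 = 0 := by
  ext n; simp [coeff_T]

lemma T_sq_mono_mul (ν : Fin 2 →₀ ℕ) (hν : ∀ i, ν i < 2) (α : Fin 2 →₀ ℕ) (c : ZMod 2) (r : R2) :
    T ν ((monomial α c) ^ 2 * r) = monomial α c * T ν r := by
  have hcc : c * c = c := by revert c; decide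
  ext n
  rw [coeff_T, sq, monomial_mul, hcc, coeff_monomial_mul', coeff_monomial_mul']
  by_cases h : α ≤ n
  · have h1 : α + α ≤ 2 • n + ν := by
      intro i
      have := h i
      simp [Finsupp.add_apply, Finsupp.smul_apply]
      omega
    rw [if_pos h1, if_pos h, coeff_T]
    have he : 2 • n + ν - (α + α) = 2 • (n - α) + ν := by
      ext i
      have := h i
      simp [Finsupp.add_apply, Finsupp.smul_apply, Finsupp.tsub_apply]
      omega
    rw [he]
  · have h1 : ¬ (α + α ≤ 2 • n + ν) := by
      intro hc
      apply h
      intro i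
      have h2 := hc i
      have h3 := hν i
      simp [Finsupp.add_apply, Finsupp.smul_apply] at h2 ⊢
      omega
    rw [if_neg h1, if_neg h]

lemma T_sq_mul (ν : Fin 2 →₀ ℕ) (hν : ∀ i, ν i < 2) (a r : R2) :
    T ν (a ^ 2 * r) = a * T ν r := by
  induction a using MvPolynomial.induction_on' with
  | monomial u c => exact T_sq_mono_mul ν hν u c r
  | add p q hp hq =>
      have : (p + q) ^ 2 = p ^ 2 + q ^ 2 := add_pow_char _ _ 2
      rw [this, add_mul, T_add, hp, hq, add_mul]
lemma pow_mem_bracketPow {q : ℕ} {J : Ideal R2} {a : R2} (ha : a ∈ J) :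
    a ^ q ∈ bracketPow q J := Ideal.subset_span ⟨a, ha, rfl⟩

lemma bracketPow_eq_map (e : ℕ) (J : Ideal R2) :
    bracketPow (2 ^ e) J = Ideal.map (iterateFrobenius R2 2 e) J := by
  have hs : ((fun a => a ^ 2 ^ e) '' (J : Set R2)) = (⇑(iterateFrobenius R2 2 e) '' (J : Set R2)) := by
    ext a
    simp [iterateFrobenius_def]
  show Ideal.span _ = Ideal.span _
  rw [hs]

lemma bracketPow_two_eq (J : Ideal R2) :
    bracketPow 2 J = Ideal.map (iterateFrobenius R2 2 1) J := by
  have := bracketPow_eq_map 1 J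
  simpa using this

lemma bracketPow_succ (e : ℕ) (J : Ideal R2) :
    bracketPow (2 ^ (e + 1)) J = bracketPow 2 (bracketPow (2 ^ e) J) := by
  rw [bracketPow_eq_map, bracketPow_two_eq, bracketPow_eq_map, Ideal.map_map]
  have h : (iterateFrobenius R2 2 1).comp (iterateFrobenius R2 2 e) = iterateFrobenius R2 2 (e + 1) :=
    RingHom.ext fun a => by
      simp only [RingHom.comp_apply, iterateFrobenius_def, frobenius_def, ← pow_mul, pow_succ]
      norm_num
  rw [h]

lemma bracketPow_mono {q : ℕ} {J K : Ideal R2} (h : J ≤ K) :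
    bracketPow q J ≤ bracketPow q K :=
  Ideal.span_mono (Set.image_mono h)

lemma T_mem (ν : Fin 2 →₀ ℕ) (hν : ∀ i, ν i < 2) (J : Ideal R2) {g : R2}
    (hg : g ∈ bracketPow 2 J) : T ν g ∈ J := by
  have H : ∀ r : R2, T ν (r * g) ∈ J := by
    induction hg using Submodule.span_induction with
    | mem x hx =>
        obtain ⟨a, ha, rfl⟩ := hx
        intro r
        rw [mul_comm, T_sq_mul ν hν]
        exact Ideal.mul_mem_right _ _ ha
    | zero => intro r; rw [mul_zero, T_zero]; exact J.zero_mem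
    | add x y hx hy ihx ihy => intro r; rw [mul_add, T_add]; exact J.add_mem (ihx r) (ihy r)
    | smul c x hx ih => intro r; rw [smul_eq_mul, ← mul_assoc]; exact ih (r * c)
  simpa using H 1

def e00 : Fin 2 →₀ ℕ := 0
def e10 : Fin 2 →₀ ℕ := Finsupp.single 0 1
def e01 : Fin 2 →₀ ℕ := Finsupp.single 1 1
def e11 : Fin 2 →₀ ℕ := Finsupp.single 0 1 + Finsupp.single 1 1

lemma e00_apply (i : Fin 2) : e00 i = 0 := rfl
lemma e10_apply (i : Fin 2) : e10 i = if i = 0 then 1 else 0 := by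
  simp [e10, Finsupp.single_apply, eq_comm]
lemma e01_apply (i : Fin 2) : e01 i = if i = 1 then 1 else 0 := by
  simp [e01, Finsupp.single_apply, eq_comm]
lemma e11_apply (i : Fin 2) : e11 i = 1 := by
  fin_cases i <;> simp [e11, Finsupp.single_apply]

lemma e00_lt : ∀ i, e00 i < 2 := by intro i; rw [e00_apply]; omega
lemma e10_lt : ∀ i, e10 i < 2 := by intro i; rw [e10_apply]; split <;> omega
lemma e01_lt : ∀ i, e01 i < 2 := by intro i; rw [e01_apply]; split <;> omega
lemma e11_lt : ∀ i, e11 i < 2 := by intro i; rw [e11_apply]; omega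

lemma T_monomial_eq (ν : Fin 2 →₀ ℕ) (c : ZMod 2) : T ν (monomial ν c) = C c := by
  ext n
  rw [coeff_T, coeff_monomial, coeff_C]
  by_cases hn : n = 0
  · subst hn; simp
  · rw [if_neg, if_neg (Ne.symm hn)]
    intro hh
    apply hn
    ext i
    have := DFunLike.congr_fun hh i
    simp [Finsupp.add_apply, Finsupp.smul_apply] at this ⊢
    omega

lemma T_monomial_ne (ν μ : Fin 2 →₀ ℕ) (hμ : ∀ i, μ i < 2) (hne : μ ≠ ν) (c : ZMod 2) :
    T ν (monomial μ c) = 0 := by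
  ext n
  rw [coeff_T, coeff_monomial]
  rw [if_neg, coeff_zero]
  intro hh
  apply hne
  have hn : n = 0 := by
    ext i
    have h1 := DFunLike.congr_fun hh i
    have h2 := hμ i
    simp [Finsupp.add_apply, Finsupp.smul_apply] at h1 ⊢
    omega
  subst hn
  simpa using hh

lemma ne_of_apply (μ ν : Fin 2 →₀ ℕ) (i : Fin 2) (h : μ i ≠ ν i) : μ ≠ ν :=
  fun hh => h (by rw [hh])

lemma ne_10_00 : e10 ≠ e00 := ne_of_apply _ _ 0 (by simp [e10_apply, e00_apply])
lemma ne_01_00 : e01 ≠ e00 := ne_of_apply _ _ 1 (by simp [e01_apply, e00_apply])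
lemma ne_11_00 : e11 ≠ e00 := ne_of_apply _ _ 0 (by simp [e11_apply, e00_apply])
lemma ne_00_10 : e00 ≠ e10 := ne_10_00.symm
lemma ne_01_10 : e01 ≠ e10 := ne_of_apply _ _ 0 (by simp [e01_apply, e10_apply])
lemma ne_11_10 : e11 ≠ e10 := ne_of_apply _ _ 1 (by simp [e11_apply, e10_apply])
lemma ne_00_01 : e00 ≠ e01 := ne_01_00.symm
lemma ne_10_01 : e10 ≠ e01 := ne_01_10.symm
lemma ne_11_01 : e11 ≠ e01 := ne_of_apply _ _ 0 (by simp [e11_apply, e01_apply])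
lemma ne_00_11 : e00 ≠ e11 := ne_11_00.symm
lemma ne_10_11 : e10 ≠ e11 := ne_11_10.symm
lemma ne_01_11 : e01 ≠ e11 := ne_11_01.symm

lemma hm_one : (1 : R2) = monomial e00 1 := by simp [e00, monomial_zero']
lemma hm_x : (X 0 : R2) = monomial e10 1 := by
  rw [e10, ← X_pow_eq_monomial, pow_one]
lemma hm_y : (X 1 : R2) = monomial e01 1 := by
  rw [e01, ← X_pow_eq_monomial, pow_one]
lemma hm_xy : (X 0 * X 1 : R2) = monomial e11 1 := by
  rw [hm_x, hm_y, monomial_mul, one_mul]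
  rfl

lemma T_dec00 (A B C D : R2) :
    T e00 (A ^ 2 * 1 + B ^ 2 * X 0 + C ^ 2 * X 1 + D ^ 2 * (X 0 * X 1)) = A := by
  rw [T_add, T_add, T_add, T_sq_mul _ e00_lt, T_sq_mul _ e00_lt, T_sq_mul _ e00_lt,
    T_sq_mul _ e00_lt, hm_one, hm_xy, hm_x, hm_y, T_monomial_eq,
    T_monomial_ne _ _ e10_lt ne_10_00, T_monomial_ne _ _ e01_lt ne_01_00,
    T_monomial_ne _ _ e11_lt ne_11_00]
  simp

lemma T_dec10 (A B C D : R2) :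
    T e10 (A ^ 2 * 1 + B ^ 2 * X 0 + C ^ 2 * X 1 + D ^ 2 * (X 0 * X 1)) = B := by
  rw [T_add, T_add, T_add, T_sq_mul _ e10_lt, T_sq_mul _ e10_lt, T_sq_mul _ e10_lt,
    T_sq_mul _ e10_lt, hm_one, hm_xy, hm_x, hm_y, T_monomial_eq,
    T_monomial_ne _ _ e00_lt ne_00_10, T_monomial_ne _ _ e01_lt ne_01_10,
    T_monomial_ne _ _ e11_lt ne_11_10]
  simp

lemma T_dec01 (A B C D : R2) :
    T e01 (A ^ 2 * 1 + B ^ 2 * X 0 + C ^ 2 * X 1 + D ^ 2 * (X 0 * X 1)) = C := by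
  rw [T_add, T_add, T_add, T_sq_mul _ e01_lt, T_sq_mul _ e01_lt, T_sq_mul _ e01_lt,
    T_sq_mul _ e01_lt, hm_one, hm_xy, hm_x, hm_y, T_monomial_eq,
    T_monomial_ne _ _ e00_lt ne_00_01, T_monomial_ne _ _ e10_lt ne_10_01,
    T_monomial_ne _ _ e11_lt ne_11_01]
  simp

lemma T_dec11 (A B C D : R2) :
    T e11 (A ^ 2 * 1 + B ^ 2 * X 0 + C ^ 2 * X 1 + D ^ 2 * (X 0 * X 1)) = D := by
  rw [T_add, T_add, T_add, T_sq_mul _ e11_lt, T_sq_mul _ e11_lt, T_sq_mul _ e11_lt,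
    T_sq_mul _ e11_lt, hm_one, hm_xy, hm_x, hm_y, T_monomial_eq,
    T_monomial_ne _ _ e00_lt ne_00_11, T_monomial_ne _ _ e10_lt ne_10_11,
    T_monomial_ne _ _ e01_lt ne_01_11]
  simp

def E (a b : ℕ) : Fin 2 →₀ ℕ := Finsupp.single 0 a + Finsupp.single 1 b

lemma E_apply0 (a b : ℕ) : E a b 0 = a := by simp [E]
lemma E_apply1 (a b : ℕ) : E a b 1 = b := by simp [E]

lemma E_eq_iff (a b c d : ℕ) : E a b = E c d ↔ a = c ∧ b = d := by
  constructor
  · intro h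
    constructor
    · have := DFunLike.congr_fun h 0; rwa [E_apply0, E_apply0] at this
    · have := DFunLike.congr_fun h 1; rwa [E_apply1, E_apply1] at this
  · rintro ⟨rfl, rfl⟩; rfl

lemma E_le_iff (a b c d : ℕ) : E a b ≤ E c d ↔ a ≤ c ∧ b ≤ d := by
  rw [Finsupp.le_def]
  constructor
  · intro h
    exact ⟨by have := h 0; rwa [E_apply0, E_apply0] at this,
           by have := h 1; rwa [E_apply1, E_apply1] at this⟩
  · rintro ⟨h1, h2⟩ i
    fin_cases i
    · simpa [E_apply0] using h1
    · simpa [E_apply1] using h2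

lemma mono_E (a b : ℕ) : (X 0 ^ a * X 1 ^ b : R2) = monomial (E a b) 1 := by
  rw [X_pow_eq_monomial, X_pow_eq_monomial, monomial_mul, one_mul]; rfl

lemma monoX_E (a : ℕ) : (X 0 ^ a : R2) = monomial (E a 0) 1 := by
  have := mono_E a 0; rwa [pow_zero, mul_one] at this

lemma monoY_E (b : ℕ) : (X 1 ^ b : R2) = monomial (E 0 b) 1 := by
  have := mono_E 0 b; rwa [pow_zero, one_mul] at this

lemma coeff_zero_of_span (S : Set R2) (m : Fin 2 →₀ ℕ)
    (hS : ∀ s ∈ S, ∃ d : Fin 2 →₀ ℕ, s = monomial d 1 ∧ ¬ d ≤ m) {g : R2}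
    (hg : g ∈ Ideal.span S) : coeff m g = 0 := by
  have H : ∀ m' : Fin 2 →₀ ℕ, m' ≤ m → coeff m' g = 0 := by
    induction hg using Submodule.span_induction with
    | mem x hx =>
        intro m' hm'
        obtain ⟨d, rfl, hd⟩ := hS x hx
        rw [coeff_monomial, if_neg]
        intro hh
        exact hd (hh ▸ hm')
    | zero => intro m' _; rw [coeff_zero]
    | add x y hx hy ihx ihy => intro m' hm'; rw [coeff_add, ihx m' hm', ihy m' hm', add_zero]
    | smul c x hx ih =>
        intro m' hm'
        rw [smul_eq_mul, coeff_mul]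
        apply Finset.sum_eq_zero
        intro uv huv
        have hsum : uv.1 + uv.2 = m' := Finset.HasAntidiagonal.mem_antidiagonal.mp huv
        have hle : uv.2 ≤ m' := hsum ▸ le_add_self
        rw [ih uv.2 (hle.trans hm'), mul_zero]
  exact H m le_rfl

lemma two_eq_zero : (2 : R2) = 0 := CharTwo.two_eq_zero

lemma hdec0 : ((X 0 * X 1 ^ 3 + X 0 ^ 3) ^ 15 : R2) = (0) ^ 2 * 1 + (X 0 ^ 22 + X 0 ^ 20 * X 1 ^ 3 + X 0 ^ 18 * X 1 ^ 6 + X 0 ^ 16 * X 1 ^ 9 + X 0 ^ 14 * X 1 ^ 12 + X 0 ^ 12 * X 1 ^ 15 + X 0 ^ 10 * X 1 ^ 18 + X 0 ^ 8 * X 1 ^ 21) ^ 2 * X 0 + (0) ^ 2 * X 1 + (X 0 ^ 21 * X 1 + X 0 ^ 19 * X 1 ^ 4 + X 0 ^ 17 * X 1 ^ 7 + X 0 ^ 15 * X 1 ^ 10 + X 0 ^ 13 * X 1 ^ 13 + X 0 ^ 11 * X 1 ^ 16 + X 0 ^ 9 * X 1 ^ 19 + X 0 ^ 7 * X 1 ^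 22) ^ 2 * (X 0 * X 1) := by
  linear_combination (6 * X 0 ^ 43 * X 1 ^ 3 + 50 * X 0 ^ 41 * X 1 ^ 6 + 224 * X 0 ^ 39 * X 1 ^ 9 + 678 * X 0 ^ 37 * X 1 ^ 12 + 1496 * X 0 ^ 35 * X 1 ^ 15 + 2496 * X 0 ^ 33 * X 1 ^ 18 + 3210 * X 0 ^ 31 * X 1 ^ 21 + 3210 * X 0 ^ 29 * X 1 ^ 24 + 2496 * X 0 ^ 27 * X 1 ^ 27 + 1496 * X 0 ^ 25 * X 1 ^ 30 + 678 * X 0 ^ 23 * X 1 ^ 33 + 224 * X 0 ^ 21 * X 1 ^ 36 + 50 * X 0 ^ 19 * X 1 ^ 39 + 6 * X 0 ^ 17 * X 1 ^ 42 : R2) * two_eq_zero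

lemma hdecB0 : (X 0 ^ 22 + X 0 ^ 20 * X 1 ^ 3 + X 0 ^ 18 * X 1 ^ 6 + X 0 ^ 16 * X 1 ^ 9 + X 0 ^ 14 * X 1 ^ 12 + X 0 ^ 12 * X 1 ^ 15 + X 0 ^ 10 * X 1 ^ 18 + X 0 ^ 8 * X 1 ^ 21 : R2) = (X 0 ^ 11 + X 0 ^ 9 * X 1 ^ 3 + X 0 ^ 7 * X 1 ^ 6 + X 0 ^ 5 * X 1 ^ 9) ^ 2 * 1 + (0) ^ 2 * X 0 + (X 0 ^ 10 * X 1 + X 0 ^ 8 * X 1 ^ 4 + X 0 ^ 6 * X 1 ^ 7 + X 0 ^ 4 * X 1 ^ 10) ^ 2 * X 1 + (0) ^ 2 * (X 0 * X 1) := by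
  linear_combination (-X 0 ^ 20 * X 1 ^ 3 - 2 * X 0 ^ 18 * X 1 ^ 6 - 3 * X 0 ^ 16 * X 1 ^ 9 - 3 * X 0 ^ 14 * X 1 ^ 12 - 2 * X 0 ^ 12 * X 1 ^ 15 - X 0 ^ 10 * X 1 ^ 18 : R2) * two_eq_zero

lemma hdecD0 : (X 0 ^ 21 * X 1 + X 0 ^ 19 * X 1 ^ 4 + X 0 ^ 17 * X 1 ^ 7 + X 0 ^ 15 * X 1 ^ 10 + X 0 ^ 13 * X 1 ^ 13 + X 0 ^ 11 * X 1 ^ 16 + X 0 ^ 9 * X 1 ^ 19 + X 0 ^ 7 * X 1 ^ 22 : R2) = (0) ^ 2 * 1 + (X 0 ^ 9 * X 1 ^ 2 + X 0 ^ 7 * X 1 ^ 5 + X 0 ^ 5 * X 1 ^ 8 + X 0 ^ 3 * X 1 ^ 11) ^ 2 * X 0 + (0) ^ 2 * X 1 + (X 0 ^ 10 + X 0 ^ 8 * X 1 ^ 3 + X 0 ^ 6 * X 1 ^ 6 + X 0 ^ 4 * X 1 ^ 9) ^ 2 * (X 0 * X 1) := by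
  linear_combination (-X 0 ^ 19 * X 1 ^ 4 - 2 * X 0 ^ 17 * X 1 ^ 7 - 3 * X 0 ^ 15 * X 1 ^ 10 - 3 * X 0 ^ 13 * X 1 ^ 13 - 2 * X 0 ^ 11 * X 1 ^ 16 - X 0 ^ 9 * X 1 ^ 19 : R2) * two_eq_zero

lemma hdec100 : (X 0 ^ 11 + X 0 ^ 9 * X 1 ^ 3 + X 0 ^ 7 * X 1 ^ 6 + X 0 ^ 5 * X 1 ^ 9 : R2) = (0) ^ 2 * 1 + (X 0 ^ 5 + X 0 ^ 3 * X 1 ^ 3) ^ 2 * X 0 + (0) ^ 2 * X 1 + (X 0 ^ 4 * X 1 + X 0 ^ 2 * X 1 ^ 4) ^ 2 * (X 0 * X 1) := by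
  linear_combination (-X 0 ^ 9 * X 1 ^ 3 - X 0 ^ 7 * X 1 ^ 6 : R2) * two_eq_zero

lemma hdec1110 : (X 0 ^ 9 * X 1 ^ 2 + X 0 ^ 7 * X 1 ^ 5 + X 0 ^ 5 * X 1 ^ 8 + X 0 ^ 3 * X 1 ^ 11 : R2) = (0) ^ 2 * 1 + (X 0 ^ 4 * X 1 + X 0 ^ 2 * X 1 ^ 4) ^ 2 * X 0 + (0) ^ 2 * X 1 + (X 0 ^ 3 * X 1 ^ 2 + X 0 * X 1 ^ 5) ^ 2 * (X 0 * X 1) := by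
  linear_combination (-X 0 ^ 7 * X 1 ^ 5 - X 0 ^ 5 * X 1 ^ 8 : R2) * two_eq_zero

lemma hdecga : (X 0 ^ 5 + X 0 ^ 3 * X 1 ^ 3 : R2) = (0) ^ 2 * 1 + (X 0 ^ 2) ^ 2 * X 0 + (0) ^ 2 * X 1 + (X 0 * X 1) ^ 2 * (X 0 * X 1) := by
  ring

lemma hdecgb : (X 0 ^ 3 * X 1 ^ 2 + X 0 * X 1 ^ 5 : R2) = (0) ^ 2 * 1 + (X 0 * X 1) ^ 2 * X 0 + (0) ^ 2 * X 1 + (X 1 ^ 2) ^ 2 * (X 0 * X 1) := by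
  ring

lemma hmem1 : ((X 0 * X 1 ^ 3 + X 0 ^ 3) ^ 1 : R2) = (X 0) ^ 2 * (X 0) + (X 1) ^ 2 * (X 0 * X 1) := by
  ring

lemma hmem2 : ((X 0 * X 1 ^ 3 + X 0 ^ 3) ^ 3 : R2) = (X 0) ^ 4 * (X 0 ^ 5 + X 0 ^ 3 * X 1 ^ 3 + X 0 * X 1 ^ 6) + (X 1 ^ 2) ^ 4 * (X 0 ^ 3 * X 1) := by
  linear_combination (X 0 ^ 7 * X 1 ^ 3 + X 0 ^ 5 * X 1 ^ 6 : R2) * two_eq_zero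

lemma hmem3 : ((X 0 * X 1 ^ 3 + X 0 ^ 3) ^ 7 : R2) = (X 0 ^ 2) ^ 8 * (X 0 ^ 5 + X 0 ^ 3 * X 1 ^ 3 + X 0 * X 1 ^ 6) + (X 0 * X 1) ^ 8 * (X 0 ^ 7 * X 1 + X 0 ^ 5 * X 1 ^ 4 + X 0 ^ 3 * X 1 ^ 7 + X 0 * X 1 ^ 10) + (X 1 ^ 2) ^ 8 * (X 0 ^ 7 * X 1 ^ 5) := by
  linear_combination (3 * X 0 ^ 19 * X 1 ^ 3 + 10 * X 0 ^ 17 * X 1 ^ 6 + 17 * X 0 ^ 15 * X 1 ^ 9 + 17 * X 0 ^ 13 * X 1 ^ 12 + 10 * X 0 ^ 11 * X 1 ^ 15 + 3 * X 0 ^ 9 * X 1 ^ 18 : R2) * two_eq_zero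

lemma hmem4 : ((X 0 * X 1 ^ 3 + X 0 ^ 3) ^ 14 : R2) = (X 0 ^ 2) ^ 16 * (X 0 ^ 10 + X 0 ^ 6 * X 1 ^ 6 + X 0 ^ 2 * X 1 ^ 12) + (X 0 * X 1) ^ 16 * (X 0 ^ 14 * X 1 ^ 2 + X 0 ^ 10 * X 1 ^ 8 + X 0 ^ 6 * X 1 ^ 14 + X 0 ^ 2 * X 1 ^ 20) + (X 1 ^ 2) ^ 16 * (X 0 ^ 14 * X 1 ^ 10) := by
  linear_combination (7 * X 0 ^ 40 * X 1 ^ 3 + 45 * X 0 ^ 38 * X 1 ^ 6 + 182 * X 0 ^ 36 * X 1 ^ 9 + 500 * X 0 ^ 34 * X 1 ^ 12 + 1001 * X 0 ^ 32 * X 1 ^ 15 + 1501 * X 0 ^ 30 * X 1 ^ 18 + 1716 * X 0 ^ 28 * X 1 ^ 21 + 1501 * X 0 ^ 26 * X 1 ^ 24 + 1001 * X 0 ^ 24 * X 1 ^ 27 + 500 * X 0 ^ 22 * X 1 ^ 30 + 182 * X 0 ^ 20 * X 1 ^ 33 + 45 * X 0 ^ 18 * X 1 ^ 36 + 7 * X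 0 ^ 16 * X 1 ^ 39 : R2) * two_eq_zero

lemma hexp2 : ((X 0 * X 1 ^ 3 + X 0 ^ 3) ^ 2 : R2) = X 0 ^ 6 + X 0 ^ 2 * X 1 ^ 6 := by
  linear_combination (X 0 ^ 4 * X 1 ^ 3 : R2) * two_eq_zero

lemma hexp6 : ((X 0 * X 1 ^ 3 + X 0 ^ 3) ^ 6 : R2) = X 0 ^ 18 + X 0 ^ 14 * X 1 ^ 6 + X 0 ^ 10 * X 1 ^ 12 + X 0 ^ 6 * X 1 ^ 18 := by
  linear_combination (3 * X 0 ^ 16 * X 1 ^ 3 + 7 * X 0 ^ 14 * X 1 ^ 6 + 10 * X 0 ^ 12 * X 1 ^ 9 + 7 * X 0 ^ 10 * X 1 ^ 12 + 3 * X 0 ^ 8 * X 1 ^ 15 : R2) * two_eq_zero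


lemma bracketPow_pow_zero (J : Ideal R2) : bracketPow (2 ^ 0) J = J := by
  unfold bracketPow
  rw [pow_zero]
  have h : ((fun a : R2 => a ^ 1) '' (J : Set R2)) = (J : Set R2) := by
    ext a; simp
  rw [h, Ideal.span_eq]

lemma bp16 (J : Ideal R2) : bracketPow (2 ^ 4) J = bracketPow 2 (bracketPow (2 ^ 3) J) :=
  bracketPow_succ 3 J
lemma bp8 (J : Ideal R2) : bracketPow (2 ^ 3) J = bracketPow 2 (bracketPow (2 ^ 2) J) :=
  bracketPow_succ 2 J
lemma bp4 (J : Ideal R2) : bracketPow (2 ^ 2) J = bracketPow 2 (bracketPow (2 ^ 1) J) :=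
  bracketPow_succ 1 J
lemma bp2 (J : Ideal R2) : bracketPow (2 ^ 1) J = bracketPow 2 J := by
  have h := bracketPow_succ 0 J
  rwa [bracketPow_pow_zero] at h

lemma gens_mem (J : Ideal R2)
    (hJ : ((X 0 * X 1 ^ 3 + X 0 ^ 3 : R2)) ^ 15 ∈ bracketPow (2 ^ 4) J) :
    (X 0 ^ 2 : R2) ∈ J ∧ (X 0 * X 1 : R2) ∈ J ∧ (X 1 ^ 2 : R2) ∈ J := by
  rw [bp16] at hJ
  have s10 := T_mem e10 e10_lt _ hJ
  have s11 := T_mem e11 e11_lt _ hJ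
  rw [hdec0, T_dec10] at s10
  rw [hdec0, T_dec11] at s11
  rw [bp8] at s10 s11
  have t1 := T_mem e00 e00_lt _ s10
  rw [hdecB0, T_dec00] at t1
  have t2 := T_mem e10 e10_lt _ s11
  rw [hdecD0, T_dec10] at t2
  rw [bp4] at t1 t2
  have u1 := T_mem e10 e10_lt _ t1
  rw [hdec100, T_dec10] at u1
  have u2 := T_mem e11 e11_lt _ t2
  rw [hdec1110, T_dec11] at u2
  rw [bp2] at u1 u2
  have v1 := T_mem e10 e10_lt _ u1
  rw [hdecga, T_dec10] at v1
  have v2 := T_mem e11 e11_lt _ u1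
  rw [hdecga, T_dec11] at v2
  have v3 := T_mem e11 e11_lt _ u2
  rw [hdecgb, T_dec11] at v3
  exact ⟨v1, v2, v3⟩

lemma pos4 : ((X 0 * X 1 ^ 3 + X 0 ^ 3 : R2)) ^ (2 ^ 4 - 2) ∈
    bracketPow (2 ^ 4) (rootIdeal 2 4 (((X 0 * X 1 ^ 3 + X 0 ^ 3 : R2)) ^ (2 ^ 4 - 1))) := by
  have hx : (X 0 ^ 2 : R2) ∈ rootIdeal 2 4 (((X 0 * X 1 ^ 3 + X 0 ^ 3 : R2)) ^ (2 ^ 4 - 1)) :=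
    Ideal.mem_sInf.mpr (fun J hJ => (gens_mem J hJ).1)
  have hxy : (X 0 * X 1 : R2) ∈ rootIdeal 2 4 (((X 0 * X 1 ^ 3 + X 0 ^ 3 : R2)) ^ (2 ^ 4 - 1)) :=
    Ideal.mem_sInf.mpr (fun J hJ => (gens_mem J hJ).2.1)
  have hy : (X 1 ^ 2 : R2) ∈ rootIdeal 2 4 (((X 0 * X 1 ^ 3 + X 0 ^ 3 : R2)) ^ (2 ^ 4 - 1)) :=
    Ideal.mem_sInf.mpr (fun J hJ => (gens_mem J hJ).2.2)
  have h14 : ((X 0 * X 1 ^ 3 + X 0 ^ 3 : R2)) ^ (2 ^ 4 - 2) =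
      ((X 0 * X 1 ^ 3 + X 0 ^ 3 : R2)) ^ 14 := by norm_num
  rw [h14, hmem4]
  exact add_mem (add_mem (Ideal.mul_mem_right _ _ (pow_mem_bracketPow hx))
    (Ideal.mul_mem_right _ _ (pow_mem_bracketPow hxy)))
    (Ideal.mul_mem_right _ _ (pow_mem_bracketPow hy))

lemma neg1 : ¬ (((X 0 * X 1 ^ 3 + X 0 ^ 3 : R2)) ^ (2 ^ 1 - 2) ∈
    bracketPow (2 ^ 1) (rootIdeal 2 1 (((X 0 * X 1 ^ 3 + X 0 ^ 3 : R2)) ^ (2 ^ 1 - 1)))) := by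
  intro h
  have hsub : rootIdeal 2 1 (((X 0 * X 1 ^ 3 + X 0 ^ 3 : R2)) ^ (2 ^ 1 - 1)) ≤
      Ideal.span {(X 0 : R2), X 1} := by
    apply sInf_le
    show ((X 0 * X 1 ^ 3 + X 0 ^ 3 : R2)) ^ (2 ^ 1 - 1) ∈
      bracketPow (2 ^ 1) (Ideal.span {(X 0 : R2), X 1})
    have h1 : ((X 0 * X 1 ^ 3 + X 0 ^ 3 : R2)) ^ (2 ^ 1 - 1) =
        ((X 0 * X 1 ^ 3 + X 0 ^ 3 : R2)) ^ 1 := by norm_num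
    rw [h1, hmem1]
    exact add_mem
      (Ideal.mul_mem_right _ _ (pow_mem_bracketPow (Ideal.subset_span (by simp))))
      (Ideal.mul_mem_right _ _ (pow_mem_bracketPow (Ideal.subset_span (by simp))))
  have h' := bracketPow_mono hsub h
  rw [bracketPow_eq_map, Ideal.map_span] at h'
  have hc := coeff_zero_of_span _ (E 0 0) ?_ h'
  · have h0 : ((X 0 * X 1 ^ 3 + X 0 ^ 3 : R2)) ^ (2 ^ 1 - 2) = 1 := by norm_num
    rw [h0] at hc
    simp [E, coeff_one] at hc
  · rintro s ⟨a, ha, rfl⟩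
    simp only [Set.mem_insert_iff, Set.mem_singleton_iff] at ha
    rcases ha with rfl | rfl
    · refine ⟨E 2 0, ?_, ?_⟩
      · rw [iterateFrobenius_def, show ((2:ℕ) ^ 1) = 2 by norm_num]
        exact monoX_E 2
      · rw [E_le_iff]; omega
    · refine ⟨E 0 2, ?_, ?_⟩
      · rw [iterateFrobenius_def, show ((2:ℕ) ^ 1) = 2 by norm_num]
        exact monoY_E 2
      · rw [E_le_iff]; omega

lemma neg2 : ¬ (((X 0 * X 1 ^ 3 + X 0 ^ 3 : R2)) ^ (2 ^ 2 - 2) ∈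
    bracketPow (2 ^ 2) (rootIdeal 2 2 (((X 0 * X 1 ^ 3 + X 0 ^ 3 : R2)) ^ (2 ^ 2 - 1)))) := by
  intro h
  have hsub : rootIdeal 2 2 (((X 0 * X 1 ^ 3 + X 0 ^ 3 : R2)) ^ (2 ^ 2 - 1)) ≤
      Ideal.span {(X 0 : R2), X 1 ^ 2} := by
    apply sInf_le
    show ((X 0 * X 1 ^ 3 + X 0 ^ 3 : R2)) ^ (2 ^ 2 - 1) ∈
      bracketPow (2 ^ 2) (Ideal.span {(X 0 : R2), X 1 ^ 2})
    have h1 : ((X 0 * X 1 ^ 3 + X 0 ^ 3 : R2)) ^ (2 ^ 2 - 1) =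
        ((X 0 * X 1 ^ 3 + X 0 ^ 3 : R2)) ^ 3 := by norm_num
    rw [h1, hmem2]
    exact add_mem
      (Ideal.mul_mem_right _ _ (pow_mem_bracketPow (Ideal.subset_span (by simp))))
      (Ideal.mul_mem_right _ _ (pow_mem_bracketPow (Ideal.subset_span (by simp))))
  have h' := bracketPow_mono hsub h
  rw [bracketPow_eq_map, Ideal.map_span] at h'
  have hc := coeff_zero_of_span _ (E 2 6) ?_ h'
  · have h0 : ((X 0 * X 1 ^ 3 + X 0 ^ 3 : R2)) ^ (2 ^ 2 - 2) =
        ((X 0 * X 1 ^ 3 + X 0 ^ 3 : R2)) ^ 2 := by norm_num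
    rw [h0, hexp2, monoX_E 6, mono_E 2 6, coeff_add, coeff_monomial, coeff_monomial,
      if_neg (by simp [E_eq_iff]), if_pos rfl] at hc
    simp at hc
  · rintro s ⟨a, ha, rfl⟩
    simp only [Set.mem_insert_iff, Set.mem_singleton_iff] at ha
    rcases ha with rfl | rfl
    · refine ⟨E 4 0, ?_, ?_⟩
      · rw [iterateFrobenius_def, show ((2:ℕ) ^ 2) = 4 by norm_num]
        exact monoX_E 4
      · rw [E_le_iff]; omega
    · refine ⟨E 0 8, ?_, ?_⟩
      · rw [iterateFrobenius_def, ← pow_mul, show 2 * (2:ℕ) ^ 2 = 8 by norm_num]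
        exact monoY_E 8
      · rw [E_le_iff]; omega

lemma neg3 : ¬ (((X 0 * X 1 ^ 3 + X 0 ^ 3 : R2)) ^ (2 ^ 3 - 2) ∈
    bracketPow (2 ^ 3) (rootIdeal 2 3 (((X 0 * X 1 ^ 3 + X 0 ^ 3 : R2)) ^ (2 ^ 3 - 1)))) := by
  intro h
  have hsub : rootIdeal 2 3 (((X 0 * X 1 ^ 3 + X 0 ^ 3 : R2)) ^ (2 ^ 3 - 1)) ≤
      Ideal.span {(X 0 ^ 2 : R2), X 0 * X 1, X 1 ^ 2} := by
    apply sInf_le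
    show ((X 0 * X 1 ^ 3 + X 0 ^ 3 : R2)) ^ (2 ^ 3 - 1) ∈
      bracketPow (2 ^ 3) (Ideal.span {(X 0 ^ 2 : R2), X 0 * X 1, X 1 ^ 2})
    have h1 : ((X 0 * X 1 ^ 3 + X 0 ^ 3 : R2)) ^ (2 ^ 3 - 1) =
        ((X 0 * X 1 ^ 3 + X 0 ^ 3 : R2)) ^ 7 := by norm_num
    rw [h1, hmem3]
    exact add_mem (add_mem
      (Ideal.mul_mem_right _ _ (pow_mem_bracketPow (Ideal.subset_span (by simp))))
      (Ideal.mul_mem_right _ _ (pow_mem_bracketPow (Ideal.subset_span (by simp)))))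
      (Ideal.mul_mem_right _ _ (pow_mem_bracketPow (Ideal.subset_span (by simp))))
  have h' := bracketPow_mono hsub h
  rw [bracketPow_eq_map, Ideal.map_span] at h'
  have hc := coeff_zero_of_span _ (E 14 6) ?_ h'
  · have h0 : ((X 0 * X 1 ^ 3 + X 0 ^ 3 : R2)) ^ (2 ^ 3 - 2) =
        ((X 0 * X 1 ^ 3 + X 0 ^ 3 : R2)) ^ 6 := by norm_num
    rw [h0, hexp6, monoX_E 18, mono_E 14 6, mono_E 10 12, mono_E 6 18, coeff_add, coeff_add,
      coeff_add, coeff_monomial, coeff_monomial, coeff_monomial, coeff_monomial,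
      if_neg (by simp [E_eq_iff]), if_pos rfl, if_neg (by simp [E_eq_iff]),
      if_neg (by simp [E_eq_iff])] at hc
    simp at hc
  · rintro s ⟨a, ha, rfl⟩
    simp only [Set.mem_insert_iff, Set.mem_singleton_iff] at ha
    rcases ha with rfl | rfl | rfl
    · refine ⟨E 16 0, ?_, ?_⟩
      · rw [iterateFrobenius_def, ← pow_mul, show 2 * (2:ℕ) ^ 3 = 16 by norm_num]
        exact monoX_E 16
      · rw [E_le_iff]; omega
    · refine ⟨E 8 8, ?_, ?_⟩
      · rw [iterateFrobenius_def, show ((2:ℕ) ^ 3) = 8 by norm_num, mul_pow]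
        exact mono_E 8 8
      · rw [E_le_iff]; omega
    · refine ⟨E 0 16, ?_, ?_⟩
      · rw [iterateFrobenius_def, ← pow_mul, show 2 * (2:ℕ) ^ 3 = 16 by norm_num]
        exact monoY_E 16
      · rw [E_le_iff]; omega

theorem stmt_19 (f : MvPolynomial (Fin 2) (ZMod 2))
    (hf : f = X 0 * (X 1) ^ 3 + (X 0) ^ 3) :
    HasLevel 2 f 4 ∧
    Nat.clog 2 (f.support.sup fun m => Finset.univ.sup ⇑m) + 1 < 4 ∧
    Nat.clog 2 f.totalDegree + 1 < 4 := by
  subst hf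
  refine ⟨⟨⟨by norm_num, pos4⟩, ?_⟩, ?_, ?_⟩
  · rintro e' ⟨h1, hmem⟩
    by_contra hlt
    push_neg at hlt
    interval_cases e'
    · exact neg1 hmem
    · exact neg2 hmem
    · exact neg3 hmem
  · have hsup : ((X 0 * (X 1) ^ 3 + (X 0) ^ 3 : R2).support.sup fun m => Finset.univ.sup ⇑m)
        ≤ 2 ^ 2 := by
      apply Finset.sup_le
      intro m hm
      have hrw : (X 0 * (X 1) ^ 3 + (X 0) ^ 3 : R2) =
          monomial (E 1 3) 1 + monomial (E 3 0) 1 := by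
        rw [← mono_E 1 3, ← monoX_E 3, pow_one]
      rw [hrw] at hm
      have hm' := MvPolynomial.support_add hm
      rw [support_monomial, support_monomial] at hm'
      simp only [one_ne_zero, if_false, Finset.mem_union, Finset.mem_singleton] at hm'
      apply Finset.sup_le
      intro i _
      rcases hm' with rfl | rfl <;> fin_cases i <;>
        simp [E_apply0, E_apply1]
    have := (Nat.clog_le_iff_le_pow (by norm_num : 1 < 2)).mpr hsup
    omega
  · have htd : (X 0 * (X 1) ^ 3 + (X 0) ^ 3 : R2).totalDegree ≤ 2 ^ 2 := by
      apply le_trans (totalDegree_add _ _)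
      apply max_le
      · apply le_trans (totalDegree_mul _ _)
        rw [totalDegree_X, totalDegree_X_pow]
        norm_num
      · rw [totalDegree_X_pow]; norm_num
    have := (Nat.clog_le_iff_le_pow (by norm_num : 1 < 2)).mpr htd
    omega

end
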